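/- Let M be a loopfree matroid on the ground set E and let crem_E : ℝ^E/ℝ𝟙 → ℝ^E/ℝ𝟙 be the map induced by v_i ↦ −v_i for all i ∈ E. Then the image crem_E(B(M)) is the support of the Bergman fan B(M') of some matroid M' on E if and only if M is totally disconnected. -/

import Mathlib

open Set Function
open scoped Matroid Classical

namespace BergmanFans

variable {α β γ : Type*}

/-! ### Matroid notions -/

/-- A circuit of a matroid: a minimal dependent set. -/
def Circuit (M : Matroid α) (C : Set α) : Prop :=
  M.Dep C ∧ ∀ D, D ⊂ C → M.Indep D

/-- The rank of a subset: the largest cardinality of an independent subset. -/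
noncomputable def rkSet (M : Matroid α) (X : Set α) : ℕ :=
  sSup {n | ∃ I, I ⊆ X ∧ M.Indep I ∧ I.ncard = n}

/-- The rank of a matroid. -/
noncomputable def rk (M : Matroid α) : ℕ := rkSet M M.E

/-- A matroid is loopfree if every singleton of the ground set is independent. -/
def Loopfree (M : Matroid α) : Prop := ∀ i ∈ M.E, M.Indep {i}

/-- A matroid is simple if it has no loops and no parallel pairs. -/
def Simple (M : Matroid α) : Prop := ∀ i ∈ M.E, ∀ j ∈ M.E, M.Indep {i, j}

/-- Two elements are related if they are equal or lie on a common circuit. -/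
def ConnRel (M : Matroid α) (i j : α) : Prop :=
  i = j ∨ ∃ C, Circuit M C ∧ i ∈ C ∧ j ∈ C

/-- The connected component of an element. -/
def component (M : Matroid α) (i : α) : Set α := {j ∈ M.E | ConnRel M i j}

/-- A matroid is connected if all pairs of elements of the ground set lie on common
circuits. -/
def Connected (M : Matroid α) : Prop :=
  M.E.Nonempty ∧ ∀ i ∈ M.E, ∀ j ∈ M.E, ConnRel M i j

/-- A matroid is totally disconnected if every connected component has rank at most one. -/
def TotallyDisconnected (M : Matroid α) : Prop :=
  ∀ i ∈ M.E, rkSet M (component M i) ≤ 1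

/-- Contraction of a set, defined by duality. -/
noncomputable def contract (M : Matroid α) (C : Set α) : Matroid α := (M✶ ↾ (M.E \ C))✶

/-- A matroid isomorphism along a bijection of the underlying types. -/
def IsMatroidIso (M₁ : Matroid α) (M₂ : Matroid β) (f : α ≃ β) : Prop :=
  f '' M₁.E = M₂.E ∧ ∀ I, I ⊆ M₁.E → (M₁.Indep I ↔ M₂.Indep (f '' I))

/-- `M` is the parallel connection of `N₁` and `N₂` along `p`, described via circuits. -/
def IsParallelConnAt (M N₁ N₂ : Matroid γ) (p : γ) : Prop :=
  N₁.E ∪ N₂.E = M.E ∧ N₁.E ∩ N₂.E = {p} ∧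
  ∀ C, Circuit M C ↔ (Circuit N₁ C ∨ Circuit N₂ C ∨
    ∃ C₁ C₂, Circuit N₁ C₁ ∧ Circuit N₂ C₂ ∧ p ∈ C₁ ∧ p ∈ C₂ ∧ C = (C₁ ∪ C₂) \ {p})

/-- `M` is a non-trivial parallel connection along `p`. -/
def IsNontrivParallelConnAt (M : Matroid γ) (p : γ) : Prop :=
  ∃ N₁ N₂, IsParallelConnAt M N₁ N₂ p ∧ 2 ≤ rk N₁ ∧ 2 ≤ rk N₂

/-- `M` is a non-trivial parallel connection. -/
def IsNontrivParallelConn (M : Matroid γ) : Prop := ∃ p, IsNontrivParallelConnAt M p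

/-- `M` is the parallel connection of matroids `M₁`, `M₂` on other ground types, glued
along `p₁ ∈ E(M₁)` and `p₂ ∈ E(M₂)` via the injections `g₁`, `g₂`. -/
def IsParallelConnEmb (M : Matroid γ) (M₁ : Matroid α) (M₂ : Matroid β)
    (g₁ : α → γ) (g₂ : β → γ) (p₁ : α) (p₂ : β) : Prop :=
  Injective g₁ ∧ Injective g₂ ∧ range g₁ ∪ range g₂ = univ ∧
    range g₁ ∩ range g₂ = {g₁ p₁} ∧ g₁ p₁ = g₂ p₂ ∧
    ∀ C, Circuit M C ↔
      ((∃ C₁, Circuit M₁ C₁ ∧ C = g₁ '' C₁) ∨ (∃ C₂, Circuit M₂ C₂ ∧ C = g₂ '' C₂) ∨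
        (∃ C₁ C₂, Circuit M₁ C₁ ∧ Circuit M₂ C₂ ∧ p₁ ∈ C₁ ∧ p₂ ∈ C₂ ∧
          C = (g₁ '' C₁ ∪ g₂ '' C₂) \ {g₁ p₁}))

/-! ### The ambient space `ℝ^E/ℝ𝟙` and its lattice -/

variable (α) [Fintype α]

/-- The line `ℝ𝟙 ⊆ ℝ^E`. -/
noncomputable def lineSub : Submodule ℝ (α → ℝ) := Submodule.span ℝ {fun _ => (1 : ℝ)}

/-- The ambient space `ℝ^E/ℝ𝟙`. -/
abbrev Amb := (α → ℝ) ⧸ lineSub α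

/-- The quotient map `ℝ^E → ℝ^E/ℝ𝟙`. -/
noncomputable def proj : (α → ℝ) →ₗ[ℝ] Amb α := (lineSub α).mkQ

/-- The lattice `ℤ^E/ℤ𝟙` inside `ℝ^E/ℝ𝟙`. -/
noncomputable def intLatt : Set (Amb α) :=
  proj α '' {x | ∀ i, ∃ n : ℤ, x i = (n : ℝ)}

variable {α}

/-- The indicator vector `v_S ∈ ℝ^E` of a subset `S ⊆ E`. -/
noncomputable def indic (S : Set α) : α → ℝ := S.indicator 1

/-! ### Fans and their isomorphisms -/

variable {V W : Type*} [AddCommGroup V] [Module ℝ V] [AddCommGroup W] [Module ℝ W]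

/-- A linear map induced by an isomorphism of the lattices `LV`, `LW`. -/
def IsLatticeLinearIso (LV : Set V) (LW : Set W) (φ : V →ₗ[ℝ] W) : Prop :=
  Function.Bijective φ ∧ φ '' LV = LW

/-- `φ` is an isomorphism of the fans `S₁`, `S₂` (viewed as their collections of cones)
with respect to the lattices `LV`, `LW`: it is induced by a lattice isomorphism, maps cones
to cones, and its inverse maps cones to cones. -/
def IsFanIso (LV : Set V) (LW : Set W) (φ : V →ₗ[ℝ] W)
    (S₁ : Set (Set V)) (S₂ : Set (Set W)) : Prop :=
  IsLatticeLinearIso LV LW φ ∧ (∀ σ ∈ S₁, φ '' σ ∈ S₂) ∧ ∀ τ ∈ S₂, φ ⁻¹' τ ∈ S₁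

/-- The ray spanned by a vector. -/
def rayOf (u : V) : Set V := {x | ∃ t : ℝ, 0 ≤ t ∧ x = t • u}

/-- The product of two fans. -/
def prodFan (S₁ : Set (Set V)) (S₂ : Set (Set W)) : Set (Set (V × W)) :=
  {σ | ∃ σ₁ ∈ S₁, ∃ σ₂ ∈ S₂, σ = σ₁ ×ˢ σ₂}

/-! ### Bergman fans -/

/-- The affine Bergman fan: the set of `x` such that for every circuit `C` the minimum of
the values of `x` on `C` is attained at least twice. -/
def affBergman (M : Matroid α) : Set (α → ℝ) :=
  {x | ∀ C, Circuit M C → ∃ i ∈ C, ∃ j ∈ C, i ≠ j ∧ x i = x j ∧ ∀ k ∈ C, x i ≤ x k}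

/-- The projective Bergman fan `B(M) ⊆ ℝ^E/ℝ𝟙`, as a set. -/
noncomputable def projBergman (M : Matroid α) : Set (Amb α) := proj α '' affBergman M

/-- A proper nonempty flat. -/
def ProperFlat (M : Matroid α) (F : Set α) : Prop := M.IsFlat F ∧ F.Nonempty ∧ F ≠ M.E

/-- The cone spanned by the classes of the indicator vectors of a finite collection of
subsets of the ground set. -/
noncomputable def flagCone (𝒞 : Finset (Set α)) : Set (Amb α) :=
  {x | ∃ c : Set α → ℝ, (∀ F, 0 ≤ c F) ∧ x = ∑ F ∈ 𝒞, c F • proj α (indic F)}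

/-- The fine fan structure on the Bergman fan: cones are spanned by flags of proper
nonempty flats. -/
noncomputable def fineFan (M : Matroid α) : Set (Set (Amb α)) :=
  {σ | ∃ 𝒞 : Finset (Set α), IsChain (· ⊆ ·) (𝒞 : Set (Set α)) ∧
    (∀ F ∈ 𝒞, ProperFlat M F) ∧ σ = flagCone 𝒞}

/-- The `w`-weight of a subset. -/
noncomputable def wt (w : α → ℝ) (B : Set α) : ℝ := ∑ i, B.indicator w i

/-- The set of bases of `M` of minimal `w`-weight: the face of the matroid polytope
selected by `w`. -/
noncomputable def minBases (M : Matroid α) (w : α → ℝ) : Set (Set α) :=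
  {B | M.IsBase B ∧ ∀ B', M.IsBase B' → wt w B ≤ wt w B'}

/-- The closed normal cone of the face of the matroid polytope selected by `w₀`. -/
noncomputable def normalCone (M : Matroid α) (w₀ : α → ℝ) : Set (α → ℝ) :=
  {w | minBases M w₀ ⊆ minBases M w}

/-- The coarse fan structure on the Bergman fan: the cones of the normal fan of the
matroid polytope whose support lies in the Bergman fan. -/
noncomputable def coarseFan (M : Matroid α) : Set (Set (Amb α)) :=
  {σ | ∃ w₀ : α → ℝ, normalCone M w₀ ⊆ affBergman M ∧ σ = proj α '' normalCone M w₀}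

/-! ### Cremona maps -/

/-- The image of the basis vector `v_k` under the Cremona map of the basis `b`. -/
noncomputable def cremTarget (M : Matroid α) (b : Set α) (k : α) : α → ℝ :=
  if k ∈ b then indic (M.closure (b \ {k})) else indic {k}

/-- The affine Cremona map associated to a basis `b` of `M`: it sends `v_k ↦ v_{cl(b\k)}`
for `k ∈ b` and fixes `v_k` for `k ∉ b`. -/
noncomputable def cremAff (M : Matroid α) (b : Set α) : (α → ℝ) →ₗ[ℝ] (α → ℝ) where
  toFun x := ∑ k, x k • cremTarget M b k
  map_add' x y := by
    simp [add_smul, Finset.sum_add_distrib]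
  map_smul' c x := by
    simp [smul_smul, Finset.smul_sum]

end BergmanFans


namespace BergmanFans

/-! ### Auxiliary lemmas -/

section Aux

variable {α : Type*} [Fintype α] {M : Matroid α}

lemma indic_apply (S : Set α) (i : α) : indic S i = if i ∈ S then 1 else 0 := by
  simp [indic, Set.indicator_apply]

lemma mem_neg_image {V : Type*} [AddCommGroup V] {T : Set V} {y : V} :
    y ∈ (fun x : V => -x) '' T ↔ -y ∈ T := by
  constructor
  · rintro ⟨x, hx, rfl⟩; simpa using hx
  · intro h; exact ⟨-y, h, neg_neg y⟩

lemma proj_eq_iff {x y : α → ℝ} :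
    proj α x = proj α y ↔ ∃ c : ℝ, x = y + c • (fun _ => (1 : ℝ)) := by
  rw [proj, Submodule.mkQ_apply, Submodule.mkQ_apply, Submodule.Quotient.eq,
    lineSub, Submodule.mem_span_singleton]
  constructor
  · rintro ⟨c, hc⟩; exact ⟨c, (eq_add_of_sub_eq hc.symm).trans (add_comm _ _)⟩
  · rintro ⟨c, rfl⟩; exact ⟨c, by abel⟩

lemma translate_mem_affBergman {x : α → ℝ} (c : ℝ) (hx : x ∈ affBergman M) :
    x + c • (fun _ => (1 : ℝ)) ∈ affBergman M := by
  intro C hC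
  obtain ⟨i, hi, j, hj, hij, heq, hmin⟩ := hx C hC
  refine ⟨i, hi, j, hj, hij, by simp [heq], fun k hk => by simpa using hmin k hk⟩

lemma proj_mem_projBergman_iff {x : α → ℝ} :
    proj α x ∈ projBergman M ↔ x ∈ affBergman M := by
  constructor
  · rintro ⟨y, hy, hproj⟩
    obtain ⟨c, hc⟩ := proj_eq_iff.mp hproj
    have hx : x = y + (-c) • (fun _ => (1 : ℝ)) := by
      rw [hc, add_assoc, ← add_smul]; simp
    rw [hx]
    exact translate_mem_affBergman _ hy
  · intro h; exact ⟨x, h, rfl⟩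

lemma neg_indic (S : Set α) :
    -(indic S) = indic Sᶜ + (-1 : ℝ) • (fun _ => (1 : ℝ)) := by
  funext i
  by_cases h : i ∈ S <;> simp [indic_apply, h]

lemma proj_neg_indic (S : Set α) : proj α (-(indic S)) = proj α (indic Sᶜ) :=
  proj_eq_iff.mpr ⟨-1, neg_indic S⟩

lemma circuit_two (hE : M.E = Set.univ) (hl : Loopfree M) {C : Set α}
    (hC : Circuit M C) : ∃ a ∈ C, ∃ b ∈ C, a ≠ b := by
  obtain ⟨a, ha⟩ := hC.1.nonempty
  refine ⟨a, ha, ?_⟩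
  by_contra h
  push_neg at h
  have hCa : C = {a} := subset_antisymm (fun x hx => (h x hx).symm) (by simpa using ha)
  exact hC.1.not_indep (hCa ▸ hl a (by rw [hE]; trivial))

lemma exists_circuit_subset (hE : M.E = Set.univ) {D : Set α} (hD : M.Dep D) :
    ∃ C, C ⊆ D ∧ Circuit M C := by
  have key : ∀ n (D : Set α), D.ncard ≤ n → M.Dep D → ∃ C, C ⊆ D ∧ Circuit M C := by
    intro n
    induction n with
    | zero =>
      intro D hcard hdep
      have : 0 < D.ncard := (Set.ncard_pos (Set.toFinite D)).mpr hdep.nonempty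
      omega
    | succ n ih =>
      intro D hcard hdep
      by_cases h : ∀ D', D' ⊂ D → M.Indep D'
      · exact ⟨D, Subset.rfl, hdep, h⟩
      · push_neg at h
        obtain ⟨D', hss, hni⟩ := h
        have hdep' : M.Dep D' :=
          (M.not_indep_iff (by rw [hE]; exact Set.subset_univ _)).mp hni
        have hlt : D'.ncard < D.ncard := Set.ncard_lt_ncard hss (Set.toFinite D)
        obtain ⟨C, h1, h2⟩ := ih D' (by omega) hdep'
        exact ⟨C, h1.trans hss.subset, h2⟩
  exact key D.ncard D le_rfl hD

lemma indic_mem_affBergman_iff (hE : M.E = Set.univ) (hl : Loopfree M) (S : Set α) :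
    indic S ∈ affBergman M ↔ M.closure S = S := by
  have hSE : S ⊆ M.E := by rw [hE]; exact Set.subset_univ _
  constructor
  · intro hmem
    refine subset_antisymm ?_ (M.subset_closure S hSE)
    intro e he
    by_contra heS
    obtain ⟨I, hI⟩ := M.exists_isBasis S hSE
    have heI : e ∈ M.closure I := by rw [hI.closure_eq_closure]; exact he
    have heI' : e ∉ I := fun h => heS (hI.subset h)
    have hdep : M.Dep (insert e I) := hI.indep.insert_dep_iff.mpr ⟨heI, heI'⟩
    obtain ⟨C, hCsub, hC⟩ := exists_circuit_subset hE hdep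
    have heC : e ∈ C := by
      by_contra h
      refine hC.1.not_indep (hI.indep.subset fun x hx => ?_)
      rcases Set.mem_insert_iff.mp (hCsub hx) with rfl | hxI
      · exact absurd hx h
      · exact hxI
    obtain ⟨i, hi, j, hj, hij, heq, hmin⟩ := hmem C hC
    have hCS : ∀ k ∈ C, k ≠ e → indic S k = 1 := by
      intro k hk hke
      have hkI : k ∈ I := (Set.mem_insert_iff.mp (hCsub hk)).resolve_left hke
      simp [indic_apply, hI.subset hkI]
    have he0 : indic S e = 0 := by simp [indic_apply, heS]
    rcases eq_or_ne i e with rfl | hie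
    · have hj1 := hCS j hj (fun h => hij h.symm)
      rw [he0, hj1] at heq
      norm_num at heq
    · have h1 := hCS i hi hie
      have h2 := hmin e heC
      rw [h1, he0] at h2
      norm_num at h2
  · intro hcl C hC
    obtain ⟨a, ha, b, hb, hab⟩ := circuit_two hE hl hC
    by_cases hCS : C ⊆ S
    · refine ⟨a, ha, b, hb, hab, by simp [indic_apply, hCS ha, hCS hb], ?_⟩
      intro k hk
      simp [indic_apply, hCS ha, hCS hk]
    · obtain ⟨e, heC, heS⟩ := Set.not_subset.mp hCS
      by_cases h2 : ∃ f ∈ C, f ∉ S ∧ f ≠ e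
      · obtain ⟨f, hfC, hfS, hfe⟩ := h2
        refine ⟨e, heC, f, hfC, fun h => hfe h.symm,
          by simp [indic_apply, heS, hfS], ?_⟩
        intro k hk
        simp only [indic_apply]
        rw [if_neg heS]
        split <;> norm_num
      · exfalso
        push_neg at h2
        have hsub : C \ {e} ⊆ S := by
          intro x hx
          by_contra hxS
          exact hx.2 (by simpa using h2 x hx.1 hxS)
        have hss : C \ {e} ⊂ C :=
          (Set.ssubset_iff_of_subset Set.diff_subset).mpr ⟨e, heC, by simp⟩
        have hind := hC.2 _ hss
        have hecl : e ∈ M.closure (C \ {e}) :=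
          hind.mem_closure_iff.mpr (Or.inl (by
            rw [Set.insert_diff_singleton, Set.insert_eq_of_mem heC]; exact hC.1))
        have : e ∈ S := by
          rw [← hcl]
          exact M.closure_subset_closure hsub hecl
        exact heS this

lemma le_rkSet {X I : Set α} (hIX : I ⊆ X) (hI : M.Indep I) : I.ncard ≤ rkSet M X := by
  refine le_csSup ⟨Nat.card α, ?_⟩ ⟨I, hIX, hI, rfl⟩
  rintro n ⟨J, hJX, _, rfl⟩
  rw [← Set.ncard_univ]
  exact Set.ncard_le_ncard (Set.subset_univ J) Set.finite_univ

lemma rkSet_le_one {i : α} {X : Set α} (hX : X ⊆ M.closure {i}) : rkSet M X ≤ 1 := by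
  refine csSup_le ⟨0, ∅, Set.empty_subset _, M.empty_indep, by simp⟩ ?_
  rintro n ⟨I, hIX, hInd, rfl⟩
  by_contra hn
  push_neg at hn
  obtain ⟨a, b, haI, hbI, hab⟩ := (Set.one_lt_ncard_iff (Set.toFinite I)).mp hn
  have hA : M.Indep {a} := hInd.subset (by simpa using haI)
  have haX : a ∈ M.closure {i} := hX (hIX haI)
  have hbX : b ∈ M.closure {i} := hX (hIX hbI)
  have hbcl : b ∈ M.closure {a} := by
    rcases eq_or_ne a i with rfl | hai
    · exact hbX
    · have hna : a ∉ M.closure ∅ := by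
        intro hmem
        rcases M.empty_indep.mem_closure_iff.mp hmem with hdep | h
        · exact hdep.not_indep (by simpa using hA)
        · exact h
      have hiex := Matroid.closure_exchange (M := M) (X := ∅) (e := a) (f := i)
        ⟨by simpa using haX, hna⟩
      have hicl : i ∈ M.closure {a} := by simpa using hiex.1
      exact M.closure_subset_closure_of_subset_closure (by simpa using hicl) hbX
  rcases hA.mem_closure_iff.mp hbcl with hdep | hmem
  · exact hdep.not_indep (hInd.subset
      (Set.insert_subset hbI (Set.singleton_subset_iff.mpr haI)))
  · exact hab (Set.mem_singleton_iff.mp hmem).symm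

lemma closure_union_of_closed (hE : M.E = Set.univ)
    (h : ∀ A B : Set α, M.closure A = A → M.closure B = B → M.closure (A ∪ B) = A ∪ B)
    (X Y : Set α) : M.closure (X ∪ Y) = M.closure X ∪ M.closure Y := by
  have hU := h _ _ (M.closure_closure X) (M.closure_closure Y)
  refine subset_antisymm ?_ (Set.union_subset
    (M.closure_subset_closure Set.subset_union_left)
    (M.closure_subset_closure Set.subset_union_right))
  have hsub : X ∪ Y ⊆ M.closure X ∪ M.closure Y :=
    Set.union_subset_union (M.subset_closure X (by rw [hE]; exact Set.subset_univ _))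
      (M.subset_closure Y (by rw [hE]; exact Set.subset_univ _))
  exact (M.closure_subset_closure hsub).trans hU.subset

lemma exists_singleton_of_mem_closure (hE : M.E = Set.univ) (hl : Loopfree M)
    (h : ∀ A B : Set α, M.closure A = A → M.closure B = B → M.closure (A ∪ B) = A ∪ B)
    (X : Set α) (c : α) (hc : c ∈ M.closure X) : ∃ i ∈ X, c ∈ M.closure {i} := by
  have hbase : ∀ c : α, c ∈ M.closure ∅ → False := by
    intro c hc
    rcases M.empty_indep.mem_closure_iff.mp hc with hdep | hm
    · exact hdep.not_indep (by simpa using hl c (by rw [hE]; trivial))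
    · exact hm
  have key : ∀ n (X : Set α), X.ncard ≤ n → ∀ c, c ∈ M.closure X →
      ∃ i ∈ X, c ∈ M.closure {i} := by
    intro n
    induction n with
    | zero =>
      intro X hcard c hc
      have hX : X = ∅ := (Set.ncard_eq_zero (Set.toFinite X)).mp (Nat.le_zero.mp hcard)
      rw [hX] at hc
      exact absurd hc (fun hc => hbase c hc)
    | succ n ih =>
      intro X hcard c hc
      rcases Set.eq_empty_or_nonempty X with rfl | ⟨x, hx⟩
      · exact absurd hc (fun hc => hbase c hc)
      · have hXd : {x} ∪ (X \ {x}) = X :=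
          Set.union_diff_cancel (Set.singleton_subset_iff.mpr hx)
        rw [← hXd, closure_union_of_closed hE h] at hc
        rcases hc with hc | hc
        · exact ⟨x, hx, hc⟩
        · have hlt : (X \ {x}).ncard < X.ncard :=
            Set.ncard_diff_singleton_lt_of_mem hx (Set.toFinite X)
          obtain ⟨i, hi, hci⟩ := ih (X \ {x}) (by omega) c hc
          exact ⟨i, hi.1, hci⟩
  exact key X.ncard X le_rfl c hc

lemma circuit_no_three (hE : M.E = Set.univ) (hl : Loopfree M)
    (h : ∀ A B : Set α, M.closure A = A → M.closure B = B → M.closure (A ∪ B) = A ∪ B)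
    {C : Set α} (hC : Circuit M C) {a b c : α}
    (ha : a ∈ C) (hb : b ∈ C) (hcC : c ∈ C) (hab : a ≠ b) (hac : a ≠ c) (hbc : b ≠ c) :
    False := by
  have hss : C \ {c} ⊂ C :=
    (Set.ssubset_iff_of_subset Set.diff_subset).mpr ⟨c, hcC, by simp⟩
  have hind := hC.2 _ hss
  have hccl : c ∈ M.closure (C \ {c}) :=
    hind.mem_closure_iff.mpr (Or.inl (by
      rw [Set.insert_diff_singleton, Set.insert_eq_of_mem hcC]; exact hC.1))
  obtain ⟨i, hiC, hci⟩ := exists_singleton_of_mem_closure hE hl h _ c hccl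
  have hic : i ≠ c := fun h' => hiC.2 (by simp [h'])
  have hdep : M.Dep (insert c {i}) := by
    have hiind : M.Indep {i} := hl i (by rw [hE]; trivial)
    rcases hiind.mem_closure_iff.mp hci with hdep | hm
    · exact hdep
    · exact absurd (by simpa using hm) hic.symm
  obtain ⟨d, hdC, hd⟩ : ∃ d ∈ C, d ∉ insert c ({i} : Set α) := by
    rcases eq_or_ne i a with rfl | hia
    · exact ⟨b, hb, by simp [hbc, hab.symm]⟩
    · exact ⟨a, ha, by simp [hac, hia.symm]⟩
  have hsub : insert c ({i} : Set α) ⊂ C :=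
    ⟨Set.insert_subset hcC (Set.singleton_subset_iff.mpr hiC.1),
      fun hsup => hd (hsup hdC)⟩
  exact hdep.not_indep (hC.2 _ hsub)

lemma td_of_union_closed (hE : M.E = Set.univ) (hl : Loopfree M)
    (h : ∀ A B : Set α, M.closure A = A → M.closure B = B → M.closure (A ∪ B) = A ∪ B) :
    TotallyDisconnected M := by
  intro i hi
  refine rkSet_le_one (i := i) ?_
  intro j hj
  obtain ⟨hjE, hrel⟩ := hj
  rcases eq_or_ne i j with rfl | hij
  · exact M.subset_closure {i} (by rw [hE]; exact Set.subset_univ _) rfl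
  · rcases hrel with rfl | ⟨C, hC, hiC, hjC⟩
    · exact absurd rfl hij
    · have hsub : C ⊆ ({i, j} : Set α) := by
        intro k hk
        by_contra hkij
        simp only [Set.mem_insert_iff, Set.mem_singleton_iff, not_or] at hkij
        exact circuit_no_three hE hl h hC hiC hjC hk hij
          (fun h' => hkij.1 h'.symm) (fun h' => hkij.2 h'.symm)
      have hCeq : C = ({i, j} : Set α) := subset_antisymm hsub
        (Set.insert_subset hiC (Set.singleton_subset_iff.mpr hjC))
      have hdep : M.Dep ({i, j} : Set α) := hCeq ▸ hC.1
      have hiind : M.Indep {i} := hl i hi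
      exact hiind.mem_closure_iff.mpr (Or.inl (by rwa [Set.pair_comm j i]))

lemma circuit_pair_of_td (hE : M.E = Set.univ) (hl : Loopfree M)
    (htd : TotallyDisconnected M) {C : Set α} (hC : Circuit M C) :
    ∃ a b, a ≠ b ∧ C = {a, b} := by
  obtain ⟨a, ha, b, hb, hab⟩ := circuit_two hE hl hC
  have habsub : ({a, b} : Set α) ⊆ C :=
    Set.insert_subset ha (Set.singleton_subset_iff.mpr hb)
  refine ⟨a, b, hab, subset_antisymm ?_ habsub⟩
  intro c hcC
  by_contra hc
  have hsub : ({a, b} : Set α) ⊂ C :=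
    (Set.ssubset_iff_of_subset habsub).mpr ⟨c, hcC, hc⟩
  have hind := hC.2 _ hsub
  have hcomp : ({a, b} : Set α) ⊆ component M a := by
    intro x hx
    rcases hx with rfl | hx
    · exact ⟨by rw [hE]; trivial, Or.inl rfl⟩
    · have : x = b := hx
      subst this
      exact ⟨by rw [hE]; trivial, Or.inr ⟨C, hC, ha, hb⟩⟩
  have h2 : 2 ≤ rkSet M (component M a) := by
    have := le_rkSet hcomp hind
    rwa [Set.ncard_pair hab] at this
  have h1 := htd a (by rw [hE]; trivial)
  omega

lemma neg_mem_affBergman_of_td (hE : M.E = Set.univ) (hl : Loopfree M)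
    (htd : TotallyDisconnected M) {x : α → ℝ} (hx : x ∈ affBergman M) :
    -x ∈ affBergman M := by
  intro C hC
  obtain ⟨a, b, hab, rfl⟩ := circuit_pair_of_td hE hl htd hC
  obtain ⟨i, hi, j, hj, hij, heq, hmin⟩ := hx _ hC
  have hxab : x a = x b := by
    rcases hi with rfl | hi
    · rcases hj with rfl | hj
      · exact absurd rfl hij
      · exact (Set.mem_singleton_iff.mp hj) ▸ heq
    · rcases hj with rfl | hj
      · exact ((Set.mem_singleton_iff.mp hi) ▸ heq).symm
      · exact absurd ((Set.mem_singleton_iff.mp hi).trans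
          (Set.mem_singleton_iff.mp hj).symm) hij
  refine ⟨a, by simp, b, by simp, hab, by simp [hxab], ?_⟩
  intro k hk
  rcases hk with rfl | hk
  · exact le_refl _
  · have : k = b := hk
    subst this
    simp [hxab]

end Aux


/-- The image of `B(M)` under the map induced by `v_i ↦ -v_i` is the
support of the Bergman fan of some matroid on `E` if and only if `M` is totally
disconnected. -/
theorem neg_image_bergman_iff_totally_disconnected
    {α : Type*} [Fintype α] (M : Matroid α) (hE : M.E = Set.univ) (hl : Loopfree M) :
    (∃ M' : Matroid α, M'.E = Set.univ ∧ Loopfree M' ∧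
      (fun x : Amb α => -x) '' projBergman M = projBergman M') ↔
      TotallyDisconnected M := by
  constructor
  · rintro ⟨M', hE', hl', himg⟩
    have hcorr : ∀ S : Set α, M'.closure S = S ↔ M.closure Sᶜ = Sᶜ := by
      intro S
      rw [← indic_mem_affBergman_iff hE' hl', ← proj_mem_projBergman_iff,
        ← himg, mem_neg_image, ← map_neg, proj_neg_indic,
        proj_mem_projBergman_iff, indic_mem_affBergman_iff hE hl]
    have hunion : ∀ A B : Set α, M.closure A = A → M.closure B = B →
        M.closure (A ∪ B) = A ∪ B := by
      intro A B hA hB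
      have hA' : M'.closure Aᶜ = Aᶜ := (hcorr Aᶜ).mpr (by rwa [compl_compl])
      have hB' : M'.closure Bᶜ = Bᶜ := (hcorr Bᶜ).mpr (by rwa [compl_compl])
      have hint : M'.closure (Aᶜ ∩ Bᶜ) = Aᶜ ∩ Bᶜ := by
        refine subset_antisymm (Set.subset_inter ?_ ?_)
          (M'.subset_closure _ (by rw [hE']; exact Set.subset_univ _))
        · exact (M'.closure_subset_closure Set.inter_subset_left).trans hA'.subset
        · exact (M'.closure_subset_closure Set.inter_subset_right).trans hB'.subset
      have hfin := (hcorr (Aᶜ ∩ Bᶜ)).mp hint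
      rwa [Set.compl_inter, compl_compl, compl_compl] at hfin
    exact td_of_union_closed hE hl hunion
  · intro htd
    refine ⟨M, hE, hl, ?_⟩
    have hneg : ∀ z : Amb α, z ∈ projBergman M → -z ∈ projBergman M := by
      rintro z ⟨x, hx, rfl⟩
      exact ⟨-x, neg_mem_affBergman_of_td hE hl htd hx, map_neg _ _⟩
    ext y
    rw [mem_neg_image]
    constructor
    · intro hmem
      have := hneg _ hmem
      rwa [neg_neg] at this
    · exact hneg y


end BergmanFans
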